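/- Maximal two-sided triangles have cocyclic parallelogram completion: fix L₁, L₂ > 0 and let z₁,z₂,z₃ ∈ ℍ with [z₁,z₂,z₃] > 0, d(z₁,z₂) = L₁, d(z₂,z₃) = L₂, such that F(z₁,z₂,z₃) ≥ F(w₁,w₂,w₃) for every triple w₁,w₂,w₃ ∈ ℍ with d(w₁,w₂) = L₁ and d(w₂,w₃) = L₂ (the third sidelength is free). Let z₄ ∈ ℍ be the parallelogram completion point: d(z₃,z₄) = L₁, d(z₁,z₄) = L₂, and z₄ on the opposite side of the line through z₁ and z₃ from z₂, i.e. [z₁,z₃,z₂]·[z₁,z₃,z₄] < 0. Then z₁, z₂, z₃, z₄ are cocyclic. -/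

import Mathlib

open Real Finset

noncomputable section

/-- Points of `ℝ³`. -/
abbrev V3 : Type := Fin 3 → ℝ

/-- The pseudo-Euclidean scalar product `⟨x,y⟩ = x₀y₀ − x₁y₁ − x₂y₂`. -/
def pscal (x y : V3) : ℝ := x 0 * y 0 - x 1 * y 1 - x 2 * y 2

/-- The hyperboloid model `ℍ` of the hyperbolic plane. -/
def Hyp : Set V3 := {x | pscal x x = 1 ∧ 0 < x 0}

/-- Inverse hyperbolic cosine. -/
def arcoshR (x : ℝ) : ℝ := Real.log (x + Real.sqrt (x ^ 2 - 1))

/-- Hyperbolic distance `d(a,b) = arcosh ⟨a,b⟩`. -/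
def dH (a b : V3) : ℝ := arcoshR (pscal a b)

/-- Determinant of the 3×3 matrix with columns `a`, `b`, `c`. -/
def det3 (a b c : V3) : ℝ :=
  a 0 * (b 1 * c 2 - b 2 * c 1) - b 0 * (a 1 * c 2 - a 2 * c 1) + c 0 * (a 1 * b 2 - a 2 * b 1)

/-- `S_ab = sinh(d(a,b)/2)`. -/
def SS (a b : V3) : ℝ := Real.sinh (dH a b / 2)

/-- Signed area of the triangle `a b c`. -/
def triArea (a b c : V3) : ℝ :=
  2 * Real.arctan (det3 a b c / (pscal a b + pscal b c + pscal c a + 1))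

/-- Signed area of the `n`-gon with vertices `z 1, …, z n`. -/
def polyArea (n : ℕ) (z : ℕ → V3) : ℝ :=
  ∑ k ∈ Finset.Ico 2 n, triArea (z 1) (z k) (z (k + 1))

/-- Cyclic successor on `{1, …, n}`. -/
def nxt (n k : ℕ) : ℕ := k % n + 1

/-- Oriented convexity of the `n`-gon `z 1, …, z n`. -/
def OrientedConvex (n : ℕ) (z : ℕ → V3) : Prop :=
  ∀ k ∈ Finset.Icc 1 n, ∀ j ∈ Finset.Icc 1 n,
    j ≠ k → j ≠ nxt n k → 0 < det3 (z k) (z (nxt n k)) (z j)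

/-- A set of points lies in a common 2-dimensional linear subspace of `ℝ³`. -/
def Collin (s : Set V3) : Prop :=
  ∃ W : Submodule ℝ V3, Module.finrank ℝ W = 2 ∧ ∀ x ∈ s, x ∈ W

/-- A set of points lies in a common affine plane of `ℝ³` not containing the origin. -/
def Cocyc (s : Set V3) : Prop :=
  ∃ u : V3, ∃ p : ℝ, u ≠ 0 ∧ p ≠ 0 ∧ ∀ x ∈ s, pscal u x = p

/-! ### Auxiliary lemmas -/

lemma pscal_comm' (x y : V3) : pscal x y = pscal y x := by unfold pscal; ring

lemma det_sq' (x y z : V3) : det3 x y z ^ 2 =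
    pscal x x * pscal y y * pscal z z + 2 * pscal x y * pscal y z * pscal x z
    - pscal x x * pscal y z ^ 2 - pscal y y * pscal x z ^ 2 - pscal z z * pscal x y ^ 2 := by
  unfold det3 pscal; ring

lemma revCS' {x y : V3} (hx : x ∈ Hyp) (hy : y ∈ Hyp) : 1 ≤ pscal x y := by
  obtain ⟨hx1, hx0⟩ := hx
  obtain ⟨hy1, hy0⟩ := hy
  unfold pscal at *
  have hx01 : 1 ≤ x 0 := by nlinarith [sq_nonneg (x 1), sq_nonneg (x 2)]
  have hy01 : 1 ≤ y 0 := by nlinarith [sq_nonneg (y 1), sq_nonneg (y 2)]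
  have key : (x 0 * y 0 - 1) ^ 2 = (x 1 * y 1 + x 2 * y 2) ^ 2
      + (x 1 * y 2 - x 2 * y 1) ^ 2 + (x 0 - y 0) ^ 2 := by
    linear_combination (x 1 * x 1 + x 2 * x 2) * hy1 + (y 0 * y 0 - 1) * hx1
  have hP : 0 ≤ x 0 * y 0 - 1 := by nlinarith
  nlinarith [key, sq_nonneg (x 0 * y 0 - 1 + (x 1 * y 1 + x 2 * y 2))]

lemma cosh_arcoshR' {x : ℝ} (hx : 1 ≤ x) : Real.cosh (arcoshR x) = x := by
  have h1 : 0 ≤ x ^ 2 - 1 := by nlinarith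
  have hs : Real.sqrt (x ^ 2 - 1) ^ 2 = x ^ 2 - 1 := Real.sq_sqrt h1
  have hpos : 0 < x + Real.sqrt (x ^ 2 - 1) := by
    nlinarith [Real.sqrt_nonneg (x ^ 2 - 1)]
  unfold arcoshR
  rw [Real.cosh_eq, Real.exp_log hpos, Real.exp_neg, Real.exp_log hpos]
  have hinv : (x + Real.sqrt (x ^ 2 - 1))⁻¹ = x - Real.sqrt (x ^ 2 - 1) := by
    rw [inv_eq_one_div, div_eq_iff (ne_of_gt hpos)]
    nlinarith [hs]
  rw [hinv]; ring

lemma arcoshR_cosh' {L : ℝ} (hL : 0 ≤ L) : arcoshR (Real.cosh L) = L := by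
  unfold arcoshR
  have h : Real.cosh L ^ 2 - 1 = Real.sinh L ^ 2 := by
    have := Real.cosh_sq L; linarith
  rw [h, Real.sqrt_sq (Real.sinh_nonneg_iff.mpr hL), Real.cosh_add_sinh, Real.log_exp]

/-- `J (u × v)`: the pscal-dual of the determinant functional `det3 u v ·`. -/
def ncross (u v : V3) : V3 := fun i =>
  if i.val = 0 then u 1 * v 2 - u 2 * v 1
  else if i.val = 1 then -(u 2 * v 0 - u 0 * v 2)
  else -(u 0 * v 1 - u 1 * v 0)

lemma pscal_ncross (u v w : V3) : pscal (ncross u v) w = det3 u v w := by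
  show (u 1 * v 2 - u 2 * v 1) * w 0 - -(u 2 * v 0 - u 0 * v 2) * w 1
      - -(u 0 * v 1 - u 1 * v 0) * w 2 = det3 u v w
  unfold det3; ring

lemma pscal_inj (u v w x y : V3) (hdet : det3 u v w ≠ 0)
    (e1 : pscal u x = pscal u y) (e2 : pscal v x = pscal v y)
    (e3 : pscal w x = pscal w y) : x = y := by
  unfold pscal at e1 e2 e3
  unfold det3 at hdet
  funext i
  fin_cases i
  · show x 0 = y 0
    have h : (u 0 * (v 1 * w 2 - v 2 * w 1) - v 0 * (u 1 * w 2 - u 2 * w 1)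
        + w 0 * (u 1 * v 2 - u 2 * v 1)) * (x 0 - y 0) = 0 := by
      linear_combination (v 1 * w 2 - v 2 * w 1) * e1 - (u 1 * w 2 - u 2 * w 1) * e2
        + (u 1 * v 2 - u 2 * v 1) * e3
    rcases mul_eq_zero.mp h with h' | h'
    · exact absurd h' hdet
    · linarith
  · show x 1 = y 1
    have h : (u 0 * (v 1 * w 2 - v 2 * w 1) - v 0 * (u 1 * w 2 - u 2 * w 1)
        + w 0 * (u 1 * v 2 - u 2 * v 1)) * (x 1 - y 1) = 0 := by
      linear_combination (v 0 * w 2 - v 2 * w 0) * e1 - (u 0 * w 2 - u 2 * w 0) * e2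
        + (u 0 * v 2 - u 2 * v 0) * e3
    rcases mul_eq_zero.mp h with h' | h'
    · exact absurd h' hdet
    · linarith
  · show x 2 = y 2
    have h : (u 0 * (v 1 * w 2 - v 2 * w 1) - v 0 * (u 1 * w 2 - u 2 * w 1)
        + w 0 * (u 1 * v 2 - u 2 * v 1)) * (y 2 - x 2) = 0 := by
      linear_combination (v 0 * w 1 - v 1 * w 0) * e1 - (u 0 * w 1 - u 1 * w 0) * e2
        + (u 0 * v 1 - u 1 * v 0) * e3
    rcases mul_eq_zero.mp h with h' | h'
    · exact absurd h' hdet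
    · linarith

/-! ### The model comparison triangles -/

/-- First comparison vertex. -/
def wA (t : ℝ) : V3 := fun i =>
  if i.val = 0 then t else if i.val = 1 then Real.sqrt (t ^ 2 - 1) else 0

/-- Middle comparison vertex (apex of the hyperboloid). -/
def wB : V3 := fun i => if i.val = 0 then 1 else 0

/-- Third comparison vertex, at angle `θ`. -/
def wC (t θ : ℝ) : V3 := fun i =>
  if i.val = 0 then t else if i.val = 1 then Real.sqrt (t ^ 2 - 1) * Real.cos θ
  else -(Real.sqrt (t ^ 2 - 1) * Real.sin θ)

lemma wA_mem {t : ℝ} (h : 1 ≤ t) : wA t ∈ Hyp := by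
  constructor
  · show t * t - Real.sqrt (t ^ 2 - 1) * Real.sqrt (t ^ 2 - 1) - 0 * 0 = 1
    rw [Real.mul_self_sqrt (by nlinarith)]; ring
  · show (0 : ℝ) < t; linarith

lemma wB_mem : wB ∈ Hyp := by
  constructor
  · show (1 : ℝ) * 1 - 0 * 0 - 0 * 0 = 1; ring
  · show (0 : ℝ) < 1; norm_num

lemma wC_mem {t : ℝ} (h : 1 ≤ t) (θ : ℝ) : wC t θ ∈ Hyp := by
  constructor
  · show t * t - Real.sqrt (t ^ 2 - 1) * Real.cos θ * (Real.sqrt (t ^ 2 - 1) * Real.cos θ)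
      - -(Real.sqrt (t ^ 2 - 1) * Real.sin θ) * -(Real.sqrt (t ^ 2 - 1) * Real.sin θ) = 1
    have hs : Real.sqrt (t ^ 2 - 1) * Real.sqrt (t ^ 2 - 1) = t ^ 2 - 1 :=
      Real.mul_self_sqrt (by nlinarith)
    have hpy : Real.sin θ ^ 2 + Real.cos θ ^ 2 = 1 := Real.sin_sq_add_cos_sq θ
    nlinarith [hs, hpy]
  · show (0 : ℝ) < t; linarith

lemma pscal_wAB (t : ℝ) : pscal (wA t) wB = t := by
  show t * 1 - Real.sqrt (t ^ 2 - 1) * 0 - 0 * 0 = t; ring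

lemma pscal_wBC (t θ : ℝ) : pscal wB (wC t θ) = t := by
  show 1 * t - 0 * (Real.sqrt (t ^ 2 - 1) * Real.cos θ)
    - 0 * -(Real.sqrt (t ^ 2 - 1) * Real.sin θ) = t
  ring

lemma area_w {ta tb : ℝ} (θ : ℝ) :
    triArea (wA ta) wB (wC tb θ) =
      2 * Real.arctan (Real.sqrt (ta ^ 2 - 1) * Real.sqrt (tb ^ 2 - 1) * Real.sin θ /
        ((1 + ta) * (1 + tb)
          - Real.sqrt (ta ^ 2 - 1) * Real.sqrt (tb ^ 2 - 1) * Real.cos θ)) := by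
  have hnum : det3 (wA ta) wB (wC tb θ)
      = Real.sqrt (ta ^ 2 - 1) * Real.sqrt (tb ^ 2 - 1) * Real.sin θ := by
    show ta * (0 * -(Real.sqrt (tb ^ 2 - 1) * Real.sin θ)
        - 0 * (Real.sqrt (tb ^ 2 - 1) * Real.cos θ))
      - 1 * (Real.sqrt (ta ^ 2 - 1) * -(Real.sqrt (tb ^ 2 - 1) * Real.sin θ)
        - 0 * (Real.sqrt (tb ^ 2 - 1) * Real.cos θ))
      + tb * (Real.sqrt (ta ^ 2 - 1) * 0 - 0 * 0)
      = Real.sqrt (ta ^ 2 - 1) * Real.sqrt (tb ^ 2 - 1) * Real.sin θ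
    ring
  have hden : pscal (wA ta) wB + pscal wB (wC tb θ) + pscal (wC tb θ) (wA ta) + 1
      = (1 + ta) * (1 + tb)
        - Real.sqrt (ta ^ 2 - 1) * Real.sqrt (tb ^ 2 - 1) * Real.cos θ := by
    show (ta * 1 - Real.sqrt (ta ^ 2 - 1) * 0 - 0 * 0)
      + (1 * tb - 0 * (Real.sqrt (tb ^ 2 - 1) * Real.cos θ)
        - 0 * -(Real.sqrt (tb ^ 2 - 1) * Real.sin θ))
      + (tb * ta - Real.sqrt (tb ^ 2 - 1) * Real.cos θ * Real.sqrt (ta ^ 2 - 1)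
        - -(Real.sqrt (tb ^ 2 - 1) * Real.sin θ) * 0) + 1
      = (1 + ta) * (1 + tb)
        - Real.sqrt (ta ^ 2 - 1) * Real.sqrt (tb ^ 2 - 1) * Real.cos θ
    ring
  unfold triArea
  rw [hnum, hden]

lemma one_lt_cosh' {L : ℝ} (hL : 0 < L) : 1 < Real.cosh L := by
  have hs : 0 < Real.sinh L := Real.sinh_pos_iff.mpr hL
  nlinarith [Real.cosh_sq L, Real.one_le_cosh L]

lemma sq_gt_one {x : ℝ} (h : 1 < x) : 1 * 1 - x ^ 2 ≠ 0 := by nlinarith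

lemma sq_lt_bounds {X K : ℝ} (hK : 0 < K) (h : X ^ 2 < K ^ 2) : -K ≤ X ∧ X ≤ K := by
  constructor
  · nlinarith [sq_nonneg (X + K)]
  · nlinarith [sq_nonneg (X - K)]

set_option maxHeartbeats 1000000 in
lemma max_crit {L1 L2 a b c D0 : ℝ} (hL1 : 0 < L1) (hL2 : 0 < L2)
    (ha : a = Real.cosh L1) (hb : b = Real.cosh L2)
    (hD0 : 0 < D0) (hsq : D0 ^ 2 = 1 + 2 * a * b * c - a ^ 2 - b ^ 2 - c ^ 2)
    (hmax : ∀ θ : ℝ,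
      2 * arctan (Real.sqrt (a ^ 2 - 1) * Real.sqrt (b ^ 2 - 1) * Real.sin θ /
        ((1 + a) * (1 + b) - Real.sqrt (a ^ 2 - 1) * Real.sqrt (b ^ 2 - 1) * Real.cos θ))
      ≤ 2 * arctan (D0 / (a + b + c + 1))) :
    c = a + b - 1 := by
  have ha1 : 1 < a := by
    rw [ha]; have h := Real.one_le_cosh L1
    have hs : 0 < Real.sinh L1 := Real.sinh_pos_iff.mpr hL1
    nlinarith [Real.cosh_sq L1]
  have hb1 : 1 < b := by
    rw [hb]; have h := Real.one_le_cosh L2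
    have hs : 0 < Real.sinh L2 := Real.sinh_pos_iff.mpr hL2
    nlinarith [Real.cosh_sq L2]
  set Ka := Real.sqrt (a ^ 2 - 1) with hKa
  set Kb := Real.sqrt (b ^ 2 - 1) with hKb
  have hKa2 : Ka ^ 2 = a ^ 2 - 1 := Real.sq_sqrt (by nlinarith)
  have hKb2 : Kb ^ 2 = b ^ 2 - 1 := Real.sq_sqrt (by nlinarith)
  have hKapos : 0 < Ka := Real.sqrt_pos.mpr (by nlinarith)
  have hKbpos : 0 < Kb := Real.sqrt_pos.mpr (by nlinarith)
  set K := Ka * Kb with hKdef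
  set S := (1 + a) * (1 + b) with hSdef
  have hKpos : 0 < K := mul_pos hKapos hKbpos
  have hK2 : K ^ 2 = (a ^ 2 - 1) * (b ^ 2 - 1) := by
    rw [hKdef, mul_pow, hKa2, hKb2]
  have hSpos : 0 < S := by rw [hSdef]; nlinarith
  have hKey : K ^ 2 - (a * b - c) ^ 2 = D0 ^ 2 := by
    rw [hK2]; linear_combination -hsq
  have hD2 : 0 < D0 ^ 2 := by positivity
  have hlt : (a * b - c) ^ 2 < K ^ 2 := by linarith
  have hKS : K < S := by
    have hsq2 : K ^ 2 < S ^ 2 := by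
      rw [hK2, hSdef]
      nlinarith [mul_pos (mul_pos (by linarith : (0:ℝ) < 1 + a)
        (by linarith : (0:ℝ) < 1 + b)) (by linarith : (0:ℝ) < 2 * a + 2 * b)]
    by_contra hcon
    push_neg at hcon
    nlinarith [mul_le_mul_of_nonneg_left hcon hSpos.le,
      mul_le_mul_of_nonneg_right hcon hKpos.le]
  have hQpos : ∀ θ : ℝ, 0 < S - K * Real.cos θ := by
    intro θ
    have := mul_le_mul_of_nonneg_left (Real.cos_le_one θ) hKpos.le
    linarith
  obtain ⟨hb1', hb2'⟩ := sq_lt_bounds hKpos hlt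
  have ht1 : -1 ≤ (a * b - c) / K := by
    rw [le_div_iff₀ hKpos]; linarith
  have ht2 : (a * b - c) / K ≤ 1 := by
    rw [div_le_one hKpos]; linarith
  set θ0 := Real.arccos ((a * b - c) / K) with hθ0
  have hcos : Real.cos θ0 = (a * b - c) / K := Real.cos_arccos ht1 ht2
  have hKcos : K * Real.cos θ0 = a * b - c := by
    rw [hcos]; field_simp
  have hsin : Real.sin θ0 = Real.sqrt (1 - ((a * b - c) / K) ^ 2) := by
    rw [hθ0, Real.sin_arccos]
  have hKsin : K * Real.sin θ0 = D0 := by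
    rw [hsin, show (1 - ((a * b - c) / K) ^ 2) = (D0 / K) ^ 2 by
      field_simp; linear_combination hKey]
    rw [Real.sqrt_sq (by positivity)]
    field_simp
  set F : ℝ → ℝ := fun θ => 2 * arctan (K * Real.sin θ / (S - K * Real.cos θ)) with hF
  have hFmax : ∀ θ, F θ ≤ F θ0 := by
    intro θ
    have h0 := hmax θ
    have hden : S - K * Real.cos θ0 = a + b + c + 1 := by
      rw [hKcos, hSdef]; ring
    simp only [hF]
    rw [hKsin, hden]
    exact h0
  have hloc : IsLocalMax F θ0 := by
    have hm : IsMaxOn F Set.univ θ0 := fun θ _ => hFmax θ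
    exact hm.isLocalMax Filter.univ_mem
  have hQ0 : S - K * Real.cos θ0 ≠ 0 := (hQpos θ0).ne'
  have hN : HasDerivAt (fun θ : ℝ => K * Real.sin θ) (K * Real.cos θ0) θ0 :=
    (Real.hasDerivAt_sin θ0).const_mul K
  have hQ : HasDerivAt (fun θ : ℝ => S - K * Real.cos θ) (-(K * -Real.sin θ0)) θ0 :=
    ((Real.hasDerivAt_cos θ0).const_mul K).const_sub S
  have hdiv := hN.div hQ hQ0
  have hder := hdiv.arctan.const_mul (2 : ℝ)
  have hder' := hder.deriv
  have hzero : deriv (fun y => 2 * arctan (((fun θ : ℝ => K * Real.sin θ) / fun θ => S - K * Real.cos θ) y)) θ0 = 0 := hloc.deriv_eq_zero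
  rw [hder'] at hzero
  have hQQ : (0:ℝ) < (S - K * Real.cos θ0) ^ 2 := by positivity
  have hinv : (0:ℝ) < 1 / (1 + (K * Real.sin θ0 / (S - K * Real.cos θ0)) ^ 2) := by
    positivity
  have hnum : K * Real.cos θ0 * (S - K * Real.cos θ0) -
      K * Real.sin θ0 * -(K * -Real.sin θ0) = 0 := by
    by_contra hne
    exact (mul_ne_zero two_ne_zero (mul_ne_zero hinv.ne'
      (div_ne_zero hne hQQ.ne'))) hzero
  have hpy : Real.sin θ0 ^ 2 + Real.cos θ0 ^ 2 = 1 := Real.sin_sq_add_cos_sq θ0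
  have hcond : K * S * Real.cos θ0 - K ^ 2 = 0 := by
    linear_combination hnum + K ^ 2 * hpy
  have h6 : S * Real.cos θ0 = K := mul_left_cancel₀ hKpos.ne' (by linear_combination hcond)
  have h7 : S * (a * b - c) = S * ((a - 1) * (b - 1)) := by
    rw [← hKcos]
    linear_combination K * h6 + hK2 - (a - 1) * (b - 1) * hSdef
  have h8 := mul_left_cancel₀ hSpos.ne' h7
  linarith [h8]

set_option maxHeartbeats 1000000 in
/-- Lemma 4.2: if an oriented triangle with two fixed sidelengths `L₁, L₂` (third side
free) has maximal area, then its parallelogram completion is cocyclic. -/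
theorem maximal_two_sided_triangle_cocyclic_completion (L1 L2 : ℝ)
    (hL1 : 0 < L1) (hL2 : 0 < L2)
    (z1 z2 z3 z4 : V3)
    (h1 : z1 ∈ Hyp) (h2 : z2 ∈ Hyp) (h3 : z3 ∈ Hyp) (h4 : z4 ∈ Hyp)
    (hor : 0 < det3 z1 z2 z3)
    (hd1 : dH z1 z2 = L1) (hd2 : dH z2 z3 = L2)
    (hmax : ∀ w1 w2 w3 : V3, w1 ∈ Hyp → w2 ∈ Hyp → w3 ∈ Hyp →
      dH w1 w2 = L1 → dH w2 w3 = L2 → triArea w1 w2 w3 ≤ triArea z1 z2 z3)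
    (hd3 : dH z3 z4 = L1) (hd4 : dH z1 z4 = L2)
    (hside : det3 z1 z3 z2 * det3 z1 z3 z4 < 0) :
    Cocyc {z1, z2, z3, z4} := by
  obtain ⟨hn1, hp1⟩ := h1
  obtain ⟨hn2, hp2⟩ := h2
  obtain ⟨hn3, hp3⟩ := h3
  obtain ⟨hn4, hp4⟩ := h4
  -- the three scalar products
  have hage : 1 ≤ pscal z1 z2 := revCS' ⟨hn1, hp1⟩ ⟨hn2, hp2⟩
  have hbge : 1 ≤ pscal z2 z3 := revCS' ⟨hn2, hp2⟩ ⟨hn3, hp3⟩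
  have h14ge : 1 ≤ pscal z1 z4 := revCS' ⟨hn1, hp1⟩ ⟨hn4, hp4⟩
  have h34ge : 1 ≤ pscal z3 z4 := revCS' ⟨hn3, hp3⟩ ⟨hn4, hp4⟩
  have ha : pscal z1 z2 = Real.cosh L1 := by
    rw [← hd1]; exact (cosh_arcoshR' hage).symm
  have hb : pscal z2 z3 = Real.cosh L2 := by
    rw [← hd2]; exact (cosh_arcoshR' hbge).symm
  have h34 : pscal z3 z4 = Real.cosh L1 := by
    rw [← hd3]; exact (cosh_arcoshR' h34ge).symm
  have h14 : pscal z1 z4 = Real.cosh L2 := by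
    rw [← hd4]; exact (cosh_arcoshR' h14ge).symm
  -- Gram identity
  have hsq : det3 z1 z2 z3 ^ 2 = 1 + 2 * pscal z1 z2 * pscal z2 z3 * pscal z1 z3
      - pscal z1 z2 ^ 2 - pscal z2 z3 ^ 2 - pscal z1 z3 ^ 2 := by
    have h := det_sq' z1 z2 z3
    rw [hn1, hn2, hn3] at h
    linear_combination h
  -- area of our triangle in closed form
  have harea : triArea z1 z2 z3 = 2 * Real.arctan (det3 z1 z2 z3 /
      (pscal z1 z2 + pscal z2 z3 + pscal z1 z3 + 1)) := by
    unfold triArea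
    rw [pscal_comm' z3 z1]
  -- the maximality in closed form, then the critical relation
  have hc : pscal z1 z3 = pscal z1 z2 + pscal z2 z3 - 1 := by
    apply max_crit hL1 hL2 ha hb hor hsq
    intro θ
    have hmem1 := wA_mem (t := pscal z1 z2) hage
    have hmem3 := wC_mem (t := pscal z2 z3) hbge θ
    have hdist1 : dH (wA (pscal z1 z2)) wB = L1 := by
      unfold dH; rw [pscal_wAB, ha]; exact arcoshR_cosh' hL1.le
    have hdist2 : dH wB (wC (pscal z2 z3) θ) = L2 := by
      unfold dH; rw [pscal_wBC, hb]; exact arcoshR_cosh' hL2.le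
    have h0 := hmax _ _ _ hmem1 wB_mem hmem3 hdist1 hdist2
    rw [area_w θ, harea] at h0
    exact h0
  -- now identify z4 with the parallelogram point y = z1 + z3 - z2
  set y : V3 := fun i => z1 i + z3 i - z2 i with hy
  have hyc : ∀ i, y i = z1 i + z3 i - z2 i := fun i => rfl
  have hc1 : 1 < pscal z1 z2 := by rw [ha]; exact one_lt_cosh' hL1
  have hc2 : 1 < pscal z2 z3 := by rw [hb]; exact one_lt_cosh' hL2
  have hcgt : 1 < pscal z1 z3 := by rw [hc]; linarith
  -- determinant switches
  have hswap : det3 z1 z3 z2 = -det3 z1 z2 z3 := by unfold det3; ring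
  have hEpos : 0 < det3 z1 z3 z4 := by
    rw [hswap] at hside
    have hprod : 0 < det3 z1 z2 z3 * det3 z1 z3 z4 := by linarith
    rcases mul_pos_iff.mp hprod with ⟨_, h⟩ | ⟨h, _⟩
    · exact h
    · linarith
  -- Gram identity for (z1, z3, z4)
  have hsq4 : det3 z1 z3 z4 ^ 2 = det3 z1 z2 z3 ^ 2 := by
    have h := det_sq' z1 z3 z4
    rw [hn1, hn3, hn4] at h
    rw [h, hsq, h34, h14, ha, hb, hc]
    ring
  have hE : det3 z1 z3 z4 = det3 z1 z2 z3 := by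
    have hfac : (det3 z1 z3 z4 - det3 z1 z2 z3) * (det3 z1 z3 z4 + det3 z1 z2 z3) = 0 := by
      linear_combination hsq4
    rcases mul_eq_zero.mp hfac with h | h
    · linarith
    · linarith
  -- scalar products with y
  have hp1y : pscal z1 y = pscal z1 z4 := by
    have : pscal z1 y = pscal z1 z1 + pscal z1 z3 - pscal z1 z2 := by
      unfold pscal; simp only [hyc]; ring
    rw [this, hn1, hc, h14, hb]; ring
  have hp3y : pscal z3 y = pscal z3 z4 := by
    have : pscal z3 y = pscal z3 z1 + pscal z3 z3 - pscal z3 z2 := by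
      unfold pscal; simp only [hyc]; ring
    rw [this, hn3, pscal_comm' z3 z1, hc, h34, pscal_comm' z3 z2, ha]; ring
  have hdy : det3 z1 z3 y = det3 z1 z2 z3 := by
    unfold det3; simp only [hyc]; ring
  -- the normal direction
  have hnn : pscal (ncross z1 z3) (ncross z1 z3) =
      pscal z1 z1 * pscal z3 z3 - pscal z1 z3 ^ 2 := by
    have e0 : ncross z1 z3 0 = z1 1 * z3 2 - z1 2 * z3 1 := rfl
    have e1 : ncross z1 z3 1 = -(z1 2 * z3 0 - z1 0 * z3 2) := rfl
    have e2 : ncross z1 z3 2 = -(z1 0 * z3 1 - z1 1 * z3 0) := rfl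
    unfold pscal
    rw [e0, e1, e2]
    ring
  have hdetn : det3 z1 z3 (ncross z1 z3) ≠ 0 := by
    rw [← pscal_ncross, hnn, hn1, hn3]
    exact sq_gt_one hcgt
  have hny : pscal (ncross z1 z3) z4 = pscal (ncross z1 z3) y := by
    rw [pscal_ncross, pscal_ncross, hE, hdy]
  have hz4 : z4 = y :=
    pscal_inj z1 z3 (ncross z1 z3) z4 y hdetn
      (by rw [hp1y]) (by rw [hp3y]) hny
  -- construct the affine plane
  refine ⟨fun i => (ncross z2 z3 i + ncross z3 z1 i + ncross z1 z2 i) / det3 z1 z2 z3,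
    1, ?_, one_ne_zero, ?_⟩
  · intro h0
    have h01 : pscal (fun i => (ncross z2 z3 i + ncross z3 z1 i + ncross z1 z2 i) /
        det3 z1 z2 z3) z1 = 0 := by
      rw [h0]
      show (0:ℝ) * z1 0 - 0 * z1 1 - 0 * z1 2 = 0
      ring
    have h02 : pscal (fun i => (ncross z2 z3 i + ncross z3 z1 i + ncross z1 z2 i) /
        det3 z1 z2 z3) z1 = 1 := by
      have hlin : pscal (fun i => (ncross z2 z3 i + ncross z3 z1 i + ncross z1 z2 i) /
          det3 z1 z2 z3) z1 = (pscal (ncross z2 z3) z1 + pscal (ncross z3 z1) z1 +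
          pscal (ncross z1 z2) z1) / det3 z1 z2 z3 := by
        unfold pscal; ring
      rw [hlin, pscal_ncross, pscal_ncross, pscal_ncross]
      rw [show det3 z2 z3 z1 = det3 z1 z2 z3 by unfold det3; ring,
        show det3 z3 z1 z1 = 0 by unfold det3; ring,
        show det3 z1 z2 z1 = 0 by unfold det3; ring]
      field_simp
      ring
    rw [h01] at h02; exact zero_ne_one h02
  · intro x hx
    have hval : ∀ v : V3, pscal (fun i => (ncross z2 z3 i + ncross z3 z1 i +
        ncross z1 z2 i) / det3 z1 z2 z3) v = (det3 z2 z3 v + det3 z3 z1 v +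
        det3 z1 z2 v) / det3 z1 z2 z3 := by
      intro v
      have hlin : pscal (fun i => (ncross z2 z3 i + ncross z3 z1 i + ncross z1 z2 i) /
          det3 z1 z2 z3) v = (pscal (ncross z2 z3) v + pscal (ncross z3 z1) v +
          pscal (ncross z1 z2) v) / det3 z1 z2 z3 := by
        unfold pscal; ring
      rw [hlin, pscal_ncross, pscal_ncross, pscal_ncross]
    simp only [Set.mem_insert_iff, Set.mem_singleton_iff] at hx
    rcases hx with rfl | rfl | rfl | rfl
    · rw [hval]
      rw [show det3 z2 z3 x = det3 x z2 z3 by unfold det3; ring,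
        show det3 z3 x x = 0 by unfold det3; ring,
        show det3 x z2 x = 0 by unfold det3; ring]
      field_simp
      ring
    · rw [hval]
      rw [show det3 x z3 x = 0 by unfold det3; ring,
        show det3 z3 z1 x = det3 z1 x z3 by unfold det3; ring,
        show det3 z1 x x = 0 by unfold det3; ring]
      field_simp
      ring
    · rw [hval]
      rw [show det3 z2 x x = 0 by unfold det3; ring,
        show det3 x z1 x = 0 by unfold det3; ring]
      field_simp
      ring
    · rw [hval, hz4]
      rw [show det3 z2 z3 y + det3 z3 z1 y + det3 z1 z2 y = det3 z1 z2 z3 by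
        unfold det3; simp only [hyc]; ring]
      field_simp
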